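/- Let d = 2^{α-2}k where n = 2^α m with α ≥ 2, m > 1 odd, and k | m. Let C = C₁ ∪ C₂ ∪ C₃ ⊆ ℤ₂^α where C₁ = {(0,…,0,1,0), (0,…,0,1,1)}, C₂ = {(0,…,0,0,1)}, C₃ = {(0,…,0,0,0)}. Then ICG_n({d, 2d, 4d}) is isomorphic to the Kronecker product X(C) × Cay(ℤ_m, S_{ℤ_m}(k)); moreover |C| = 4 and the sum of the elements of C is 0. -/

import Mathlib

open Matrix Complex

/-- Adjacency matrix of the Cayley graph `Cay(Γ, S)`: `a, b` adjacent iff `a - b ∈ S`. -/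
noncomputable def cayAdj {G : Type*} [AddGroup G] (S : Set G) : Matrix G G ℂ :=
  Matrix.of fun a b => S.indicator (fun _ => (1 : ℂ)) (a - b)

/-- Adjacency matrix of the integral circulant graph `ICG_n(D)` (convention
`gcd(0, n) = n`, so `S_{ℤ_n}(n) = {0}` gives a loop at each vertex). -/
noncomputable def icgAdj (n : ℕ) (D : Set ℕ) : Matrix (ZMod n) (ZMod n) ℂ :=
  cayAdj {x : ZMod n | Nat.gcd x.val n ∈ D}

/-- Adjacency matrix of the cubelike graph `X(C)` over `ℤ₂^α`:
`x, y` adjacent iff `x + y ∈ C`. -/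
noncomputable def cubeAdj {n : ℕ} (C : Set (Fin n → ZMod 2)) :
    Matrix (Fin n → ZMod 2) (Fin n → ZMod 2) ℂ :=
  Matrix.of fun x y => C.indicator (fun _ => (1 : ℂ)) (x + y)

/-- The tuple `(0, …, 0, 1, 0) ∈ ℤ₂^α` (`1` in position `α - 2`). -/
def c₁ (α : ℕ) : Fin α → ZMod 2 := fun j => if (j : ℕ) = α - 2 then 1 else 0

/-- The tuple `(0, …, 0, 1, 1) ∈ ℤ₂^α`. -/
def c₂ (α : ℕ) : Fin α → ZMod 2 := fun j => if (j : ℕ) = α - 2 ∨ (j : ℕ) = α - 1 then 1 else 0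

/-- The tuple `(0, …, 0, 0, 1) ∈ ℤ₂^α` (`1` in position `α - 1`). -/
def c₃ (α : ℕ) : Fin α → ZMod 2 := fun j => if (j : ℕ) = α - 1 then 1 else 0

/-- The set `C = C₁ ∪ C₂ ∪ C₃ = {(0,…,0,1,0), (0,…,0,1,1)} ∪ {(0,…,0,0,1)} ∪ {(0,…,0,0,0)}`
of `ℤ₂^α`. -/
def cubeC (α : ℕ) : Finset (Fin α → ZMod 2) := {c₁ α, c₂ α, c₃ α, 0}

/-- bits agree below `t` iff values agree mod `2^t` -/
lemma bits_eq_iff_mod_eq (x y t : ℕ) :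
    (∀ j < t, x / 2 ^ j % 2 = y / 2 ^ j % 2) ↔ x % 2 ^ t = y % 2 ^ t := by
  constructor
  · intro h
    apply Nat.eq_of_testBit_eq
    intro j
    rw [Nat.testBit_mod_two_pow, Nat.testBit_mod_two_pow]
    by_cases hj : j < t
    · simp [hj, Nat.testBit_eq_decide_div_mod_eq, h j hj]
    · simp [hj]
  · intro h j hj
    have hdvd : 2 ^ j * 2 ∣ 2 ^ t := by
      rw [← pow_succ]; exact pow_dvd_pow 2 (by omega)
    have hmm : x % (2 ^ j * 2) = y % (2 ^ j * 2) := by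
      rw [← Nat.mod_mod_of_dvd x hdvd, h, Nat.mod_mod_of_dvd y hdvd]
    rw [← Nat.mod_mul_right_div_self, ← Nat.mod_mul_right_div_self, hmm]

lemma two_pow_mul_odd_inj {i j u v : ℕ} (hu : Odd u) (hv : Odd v)
    (h : 2 ^ i * u = 2 ^ j * v) : i = j ∧ u = v := by
  have hcu : Nat.Coprime (2 ^ j) u := Nat.Coprime.pow_left _ hu.coprime_two_left
  have hcv : Nat.Coprime (2 ^ i) v := Nat.Coprime.pow_left _ hv.coprime_two_left
  have h1 : (2 : ℕ) ^ i ∣ 2 ^ j :=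
    Nat.Coprime.dvd_of_dvd_mul_right hcv (h ▸ dvd_mul_right (2 ^ i) u)
  have h2 : (2 : ℕ) ^ j ∣ 2 ^ i :=
    Nat.Coprime.dvd_of_dvd_mul_right hcu (h.symm ▸ dvd_mul_right (2 ^ j) v)
  have hij : i = j :=
    le_antisymm ((Nat.pow_dvd_pow_iff_le_right one_lt_two).mp h1)
      ((Nat.pow_dvd_pow_iff_le_right one_lt_two).mp h2)
  subst hij
  exact ⟨rfl, Nat.eq_of_mul_eq_mul_left (pow_pos (by norm_num) i) h⟩

noncomputable def digitEquiv (α : ℕ) : ZMod (2 ^ α) ≃ (Fin α → ZMod 2) :=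
  Equiv.ofBijective (fun a j => ((a.val / 2 ^ (j : ℕ) % 2 : ℕ) : ZMod 2))
    (by
      haveI : NeZero (2 ^ α) := ⟨pow_ne_zero _ two_ne_zero⟩
      rw [Fintype.bijective_iff_injective_and_card]
      constructor
      · intro a b hab
        apply ZMod.val_injective
        have hbits : ∀ j < α, a.val / 2 ^ j % 2 = b.val / 2 ^ j % 2 := by
          intro j hj
          have h1 := congrFun hab ⟨j, hj⟩
          rw [ZMod.natCast_eq_natCast_iff'] at h1
          rwa [Nat.mod_mod_of_dvd _ (dvd_refl 2), Nat.mod_mod_of_dvd _ (dvd_refl 2)] at h1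
        have h2 := (bits_eq_iff_mod_eq a.val b.val α).mp hbits
        rwa [Nat.mod_eq_of_lt a.val_lt, Nat.mod_eq_of_lt b.val_lt] at h2
      · simp [ZMod.card])

lemma digitEquiv_apply (α : ℕ) (a : ZMod (2 ^ α)) (j : Fin α) :
    digitEquiv α a j = ((a.val / 2 ^ (j : ℕ) % 2 : ℕ) : ZMod 2) := rfl

lemma mem_cubeC_iff {α : ℕ} (hα : 2 ≤ α) (w : Fin α → ZMod 2) :
    w ∈ cubeC α ↔ ∀ j : Fin α, (j : ℕ) < α - 2 → w j = 0 := by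
  constructor
  · intro hw j hj
    simp only [cubeC, Finset.mem_insert, Finset.mem_singleton] at hw
    rcases hw with rfl | rfl | rfl | rfl
    · exact if_neg (by omega)
    · exact if_neg (by omega)
    · exact if_neg (by omega)
    · rfl
  · intro h
    have h2 : ∀ z : ZMod 2, z = 0 ∨ z = 1 := by decide
    have hlt1 : α - 2 < α := by omega
    have hlt2 : α - 1 < α := by omega
    have hdet : ∀ j : Fin α, (j : ℕ) < α - 2 ∨ j = ⟨α - 2, hlt1⟩ ∨ j = ⟨α - 1, hlt2⟩ := by
      intro j
      have := j.isLt
      rcases lt_trichotomy ((j : ℕ)) (α - 2) with h' | h' | h'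
      · exact Or.inl h'
      · exact Or.inr (Or.inl (Fin.ext (show (j : ℕ) = α - 2 from h')))
      · exact Or.inr (Or.inr (Fin.ext (show (j : ℕ) = α - 1 by omega)))
    simp only [cubeC, Finset.mem_insert, Finset.mem_singleton]
    rcases h2 (w ⟨α - 2, hlt1⟩) with ha | ha <;> rcases h2 (w ⟨α - 1, hlt2⟩) with hb | hb
    · refine Or.inr (Or.inr (Or.inr (funext fun j => ?_)))
      rcases hdet j with hj | rfl | rfl
      · exact h j hj
      · exact ha
      · exact hb
    · refine Or.inr (Or.inr (Or.inl (funext fun j => ?_)))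
      rcases hdet j with hj | rfl | rfl
      · rw [h j hj, c₃, if_neg (by omega)]
      · rw [ha, c₃]; rw [if_neg (show ¬(α - 2 = α - 1) by omega)]
      · rw [hb, c₃, if_pos (show α - 1 = α - 1 from rfl)]
    · refine Or.inl (funext fun j => ?_)
      rcases hdet j with hj | rfl | rfl
      · rw [h j hj, c₁, if_neg (by omega)]
      · rw [ha, c₁, if_pos (show α - 2 = α - 2 from rfl)]
      · rw [hb, c₁, if_neg (show ¬(α - 1 = α - 2) by omega)]
    · refine Or.inr (Or.inl (funext fun j => ?_))
      rcases hdet j with hj | rfl | rfl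
      · rw [h j hj, c₂, if_neg (by omega)]
      · rw [ha, c₂, if_pos (Or.inl (show α - 2 = α - 2 from rfl))]
      · rw [hb, c₂, if_pos (Or.inr (show α - 1 = α - 1 from rfl))]

lemma gcd_mem_iff {α m k : ℕ} (hα : 2 ≤ α) (hm : Odd m) (hk : k ∣ m) (w : ℕ) :
    Nat.gcd w (2 ^ α * m) ∈
        ({2 ^ (α - 2) * k, 2 * (2 ^ (α - 2) * k), 4 * (2 ^ (α - 2) * k)} : Set ℕ) ↔
      2 ^ (α - 2) ∣ w ∧ Nat.gcd w m = k := by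
  have hcop : Nat.Coprime (2 ^ α) m := Nat.Coprime.pow_left _ hm.coprime_two_left
  have hsplit : Nat.gcd w (2 ^ α * m) = Nat.gcd w (2 ^ α) * Nat.gcd w m :=
    Nat.Coprime.gcd_mul w hcop
  obtain ⟨j, hjα, hje⟩ := (Nat.dvd_prime_pow Nat.prime_two).mp (Nat.gcd_dvd_right w (2 ^ α))
  have hodd : ∀ d : ℕ, d ∣ m → Odd d := by
    intro d hd
    rw [Nat.odd_iff]
    rcases Nat.mod_two_eq_zero_or_one d with h | h
    · exfalso
      have h2 : 2 ∣ m := dvd_trans (Nat.dvd_of_mod_eq_zero h) hd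
      have h3 := Nat.odd_iff.mp hm
      omega
    · exact h
  have hgm : Odd (Nat.gcd w m) := hodd _ (Nat.gcd_dvd_right w m)
  have hkodd : Odd k := hodd k hk
  have e1 : 2 * (2 ^ (α - 2) * k) = 2 ^ (α - 1) * k := by
    conv_rhs => rw [show α - 1 = α - 2 + 1 by omega]
    rw [pow_succ]; ring
  have e2 : 4 * (2 ^ (α - 2) * k) = 2 ^ α * k := by
    conv_rhs => rw [show α = α - 2 + 2 by omega]
    rw [pow_add]; norm_num; ring
  simp only [Set.mem_insert_iff, Set.mem_singleton_iff]
  constructor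
  · intro h
    have key : ∀ i : ℕ, α - 2 ≤ i → Nat.gcd w (2 ^ α * m) = 2 ^ i * k →
        2 ^ (α - 2) ∣ w ∧ Nat.gcd w m = k := by
      intro i hi he
      rw [hsplit, hje] at he
      obtain ⟨hji, huv⟩ := two_pow_mul_odd_inj hgm hkodd he
      have hdd : (2 : ℕ) ^ (α - 2) ∣ 2 ^ j := pow_dvd_pow 2 (by omega)
      exact ⟨hdd.trans (hje ▸ Nat.gcd_dvd_left w (2 ^ α)), huv⟩
    rcases h with h | h | h
    · exact key (α - 2) le_rfl h
    · exact key (α - 1) (by omega) (h.trans e1)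
    · exact key α (by omega) (h.trans e2)
  · rintro ⟨h1, h2⟩
    have hd : (2 : ℕ) ^ (α - 2) ∣ 2 ^ j := by
      rw [← hje]; exact Nat.dvd_gcd h1 (pow_dvd_pow 2 (by omega))
    have hj2 : α - 2 ≤ j := (Nat.pow_dvd_pow_iff_le_right one_lt_two).mp hd
    rw [hsplit, hje, h2]
    have hcases : j = α - 2 ∨ j = α - 1 ∨ j = α := by omega
    rcases hcases with hj | hj | hj
    · left; rw [hj]
    · right; left; rw [hj, ← e1]
    · right; right; rw [hj, ← e2]

lemma digit_sum_mem_iff {α : ℕ} (hα : 2 ≤ α) (a b : ZMod (2 ^ α)) :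
    digitEquiv α a + digitEquiv α b ∈ (↑(cubeC α) : Set (Fin α → ZMod 2)) ↔
      a.val % 2 ^ (α - 2) = b.val % 2 ^ (α - 2) := by
  rw [Finset.mem_coe, mem_cubeC_iff hα, ← bits_eq_iff_mod_eq]
  have key : ∀ x y : ℕ, (((x % 2 : ℕ) : ZMod 2) + ((y % 2 : ℕ) : ZMod 2) = 0) ↔
      x % 2 = y % 2 := by
    intro x y
    rcases Nat.mod_two_eq_zero_or_one x with hx | hx <;>
      rcases Nat.mod_two_eq_zero_or_one y with hy | hy <;> rw [hx, hy] <;> decide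
  have hidx : ∀ j : Fin α, ((digitEquiv α a + digitEquiv α b) j = 0 ↔
      a.val / 2 ^ (j : ℕ) % 2 = b.val / 2 ^ (j : ℕ) % 2) := by
    intro j
    rw [Pi.add_apply, digitEquiv_apply, digitEquiv_apply]
    exact key _ _
  constructor
  · intro h j hj
    have hj' : j < α := by omega
    exact (hidx ⟨j, hj'⟩).mp (h ⟨j, hj'⟩ hj)
  · intro h j hj
    exact (hidx j).mpr (h (j : ℕ) hj)

lemma cubeC_card {α : ℕ} (hα : 2 ≤ α) : (cubeC α).card = 4 := by
  have hlt1 : α - 2 < α := by omega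
  have hlt2 : α - 1 < α := by omega
  have h12 : c₁ α ≠ c₂ α := by
    intro h
    have := congrFun h ⟨α - 1, hlt2⟩
    rw [c₁, c₂, if_neg (show ¬(α - 1 = α - 2) by omega),
      if_pos (Or.inr (show α - 1 = α - 1 from rfl))] at this
    exact zero_ne_one this
  have h13 : c₁ α ≠ c₃ α := by
    intro h
    have := congrFun h ⟨α - 2, hlt1⟩
    rw [c₁, c₃, if_pos (show α - 2 = α - 2 from rfl),
      if_neg (show ¬(α - 2 = α - 1) by omega)] at this
    exact one_ne_zero this
  have h10 : c₁ α ≠ 0 := by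
    intro h
    have := congrFun h ⟨α - 2, hlt1⟩
    rw [c₁, if_pos (show α - 2 = α - 2 from rfl)] at this
    exact one_ne_zero this
  have h23 : c₂ α ≠ c₃ α := by
    intro h
    have := congrFun h ⟨α - 2, hlt1⟩
    rw [c₂, c₃, if_pos (Or.inl (show α - 2 = α - 2 from rfl)),
      if_neg (show ¬(α - 2 = α - 1) by omega)] at this
    exact one_ne_zero this
  have h20 : c₂ α ≠ 0 := by
    intro h
    have := congrFun h ⟨α - 2, hlt1⟩
    rw [c₂, if_pos (Or.inl (show α - 2 = α - 2 from rfl))] at this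
    exact one_ne_zero this
  have h30 : c₃ α ≠ 0 := by
    intro h
    have := congrFun h ⟨α - 1, hlt2⟩
    rw [c₃, if_pos (show α - 1 = α - 1 from rfl)] at this
    exact one_ne_zero this
  rw [cubeC]
  rw [Finset.card_insert_of_notMem (by simp [h12, h13, h10]),
    Finset.card_insert_of_notMem (by simp [h23, h20]),
    Finset.card_insert_of_notMem (by simp [h30]), Finset.card_singleton]

lemma cubeC_sum {α : ℕ} (hα : 2 ≤ α) : ∑ c ∈ cubeC α, c = 0 := by
  have hlt1 : α - 2 < α := by omega
  have hlt2 : α - 1 < α := by omega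
  have h12 : c₁ α ≠ c₂ α := by
    intro h
    have := congrFun h ⟨α - 1, hlt2⟩
    rw [c₁, c₂, if_neg (show ¬(α - 1 = α - 2) by omega),
      if_pos (Or.inr (show α - 1 = α - 1 from rfl))] at this
    exact zero_ne_one this
  have h13 : c₁ α ≠ c₃ α := by
    intro h
    have := congrFun h ⟨α - 2, hlt1⟩
    rw [c₁, c₃, if_pos (show α - 2 = α - 2 from rfl),
      if_neg (show ¬(α - 2 = α - 1) by omega)] at this
    exact one_ne_zero this
  have h10 : c₁ α ≠ 0 := by
    intro h
    have := congrFun h ⟨α - 2, hlt1⟩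
    rw [c₁, if_pos (show α - 2 = α - 2 from rfl)] at this
    exact one_ne_zero this
  have h23 : c₂ α ≠ c₃ α := by
    intro h
    have := congrFun h ⟨α - 2, hlt1⟩
    rw [c₂, c₃, if_pos (Or.inl (show α - 2 = α - 2 from rfl)),
      if_neg (show ¬(α - 2 = α - 1) by omega)] at this
    exact one_ne_zero this
  have h20 : c₂ α ≠ 0 := by
    intro h
    have := congrFun h ⟨α - 2, hlt1⟩
    rw [c₂, if_pos (Or.inl (show α - 2 = α - 2 from rfl))] at this
    exact one_ne_zero this
  have h30 : c₃ α ≠ 0 := by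
    intro h
    have := congrFun h ⟨α - 1, hlt2⟩
    rw [c₃, if_pos (show α - 1 = α - 1 from rfl)] at this
    exact one_ne_zero this
  rw [cubeC]
  rw [Finset.sum_insert (by simp [h12, h13, h10]),
    Finset.sum_insert (by simp [h23, h20]),
    Finset.sum_insert (by simp [h30]), Finset.sum_singleton]
  funext j
  simp only [Pi.add_apply, Pi.zero_apply, c₁, c₂, c₃]
  by_cases hj1 : (j : ℕ) = α - 2 <;> by_cases hj2 : (j : ℕ) = α - 1
  · omega
  · rw [if_pos hj1, if_pos (Or.inl hj1), if_neg hj2]; rfl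
  · rw [if_neg hj1, if_pos (Or.inr hj2), if_pos hj2]; rfl
  · rw [if_neg hj1, if_neg (by omega), if_neg hj2]; rfl


/-- Let `n = 2^α * m` with `α ≥ 2`, `m > 1` odd, `k ∣ m`, and
`d = 2^{α-2} * k`.  With `C = cubeC α` as above, `ICG_n({d, 2d, 4d})` is isomorphic, as a
graph, to the Kronecker product `X(C) × Cay(ℤ_m, S_{ℤ_m}(k))`; moreover `|C| = 4` and the sum
of the elements of `C` is `0`. -/
theorem icg_d2d4d_iso_kronecker (α m k : ℕ) (hα : 2 ≤ α) (hm1 : 1 < m) (hm : Odd m)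
    (hk : k ∣ m) :
    (∃ e : ZMod (2 ^ α * m) ≃ (Fin α → ZMod 2) × ZMod m,
      ∀ x y : ZMod (2 ^ α * m),
        icgAdj (2 ^ α * m) {2 ^ (α - 2) * k, 2 * (2 ^ (α - 2) * k), 4 * (2 ^ (α - 2) * k)}
            x y =
          Matrix.kroneckerMap (· * ·)
            (cubeAdj (↑(cubeC α) : Set (Fin α → ZMod 2)))
            (cayAdj {z : ZMod m | Nat.gcd z.val m = k})
            (e x) (e y)) ∧
    (cubeC α).card = 4 ∧ ∑ c ∈ cubeC α, c = 0 := by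
  haveI : NeZero (2 ^ α * m) := ⟨by positivity⟩
  haveI : NeZero (2 ^ α) := ⟨by positivity⟩
  haveI : NeZero m := ⟨by omega⟩
  have hcop : Nat.Coprime (2 ^ α) m := Nat.Coprime.pow_left _ hm.coprime_two_left
  have hdvd2 : (2 : ℕ) ^ (α - 2) ∣ 2 ^ α := pow_dvd_pow 2 (by omega)
  have hsd : (2 : ℕ) ^ (α - 2) ∣ 2 ^ α * m := hdvd2.trans (dvd_mul_right _ _)
  set crt := ZMod.chineseRemainder hcop with hcrtdef
  refine ⟨⟨crt.toEquiv.trans (Equiv.prodCongr (digitEquiv α) (Equiv.refl (ZMod m))), ?_⟩,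
    cubeC_card hα, cubeC_sum hα⟩
  have hcrt : ∀ z : ZMod (2 ^ α * m), crt z = ((z.val : ZMod (2 ^ α)), (z.val : ZMod m)) := by
    intro z
    conv_lhs => rw [← ZMod.natCast_zmod_val z]
    rw [map_natCast]
    exact Prod.ext (by simp) (by simp)
  intro x y
  set w := x - y with hw
  -- second component
  have hcastm : ∀ z : ZMod (2 ^ α * m), ((z.val : ZMod m)) =
      ZMod.castHom (dvd_mul_left m (2 ^ α)) (ZMod m) z := fun z => by
    rw [ZMod.natCast_val, ZMod.castHom_apply]
  have hsnd : (crt x).2 - (crt y).2 = (w.val : ZMod m) := by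
    rw [hcrt x, hcrt y, hw]
    show (x.val : ZMod m) - (y.val : ZMod m) = (((x - y).val : ℕ) : ZMod m)
    rw [hcastm x, hcastm y, hcastm (x - y), map_sub]
  have hQ2 : ((crt x).2 - (crt y).2 ∈ {z : ZMod m | Nat.gcd z.val m = k}) ↔
      Nat.gcd w.val m = k := by
    rw [Set.mem_setOf_eq, hsnd, ZMod.val_natCast]
    rw [show Nat.gcd (w.val % m) m = Nat.gcd w.val m by
      rw [← Nat.gcd_rec, Nat.gcd_comm]]
  -- first component
  have hQ1 : (digitEquiv α (crt x).1 + digitEquiv α (crt y).1 ∈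
      (↑(cubeC α) : Set (Fin α → ZMod 2))) ↔ 2 ^ (α - 2) ∣ w.val := by
    rw [digit_sum_mem_iff hα]
    rw [hcrt x, hcrt y]
    simp only [ZMod.val_natCast]
    rw [Nat.mod_mod_of_dvd _ hdvd2, Nat.mod_mod_of_dvd _ hdvd2]
    rw [← ZMod.natCast_eq_natCast_iff']
    have hcast : ∀ z : ZMod (2 ^ α * m),
        ((z.val : ZMod (2 ^ (α - 2)))) = ZMod.castHom hsd (ZMod (2 ^ (α - 2))) z := by
      intro z
      rw [ZMod.natCast_val, ZMod.castHom_apply]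
    rw [hcast x, hcast y, ← sub_eq_zero, ← map_sub, ← hw, ← hcast w,
      ZMod.natCast_eq_zero_iff]
  have hP : (w ∈ {z : ZMod (2 ^ α * m) | Nat.gcd z.val (2 ^ α * m) ∈
      ({2 ^ (α - 2) * k, 2 * (2 ^ (α - 2) * k), 4 * (2 ^ (α - 2) * k)} : Set ℕ)}) ↔
      (digitEquiv α (crt x).1 + digitEquiv α (crt y).1 ∈
        (↑(cubeC α) : Set (Fin α → ZMod 2))) ∧
      ((crt x).2 - (crt y).2 ∈ {z : ZMod m | Nat.gcd z.val m = k}) := by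
    rw [Set.mem_setOf_eq, gcd_mem_iff hα hm hk, hQ1, hQ2]
  show ({z : ZMod (2 ^ α * m) | Nat.gcd z.val (2 ^ α * m) ∈
      ({2 ^ (α - 2) * k, 2 * (2 ^ (α - 2) * k), 4 * (2 ^ (α - 2) * k)} : Set ℕ)}).indicator
      (fun _ => (1 : ℂ)) (x - y) =
    ((↑(cubeC α) : Set (Fin α → ZMod 2))).indicator (fun _ => (1 : ℂ))
      (digitEquiv α (crt x).1 + digitEquiv α (crt y).1) *
    ({z : ZMod m | Nat.gcd z.val m = k}).indicator (fun _ => (1 : ℂ))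
      ((crt x).2 - (crt y).2)
  by_cases h1 : digitEquiv α (crt x).1 + digitEquiv α (crt y).1 ∈
      (↑(cubeC α) : Set (Fin α → ZMod 2)) <;>
    by_cases h2 : (crt x).2 - (crt y).2 ∈ {z : ZMod m | Nat.gcd z.val m = k}
  · rw [Set.indicator_of_mem (hP.mpr ⟨h1, h2⟩), Set.indicator_of_mem h1,
      Set.indicator_of_mem h2, one_mul]
  · rw [Set.indicator_of_notMem (fun hc => h2 (hP.mp hc).2),
      Set.indicator_of_notMem h2, mul_zero]
  · rw [Set.indicator_of_notMem (fun hc => h1 (hP.mp hc).1),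
      Set.indicator_of_notMem h1, zero_mul]
  · rw [Set.indicator_of_notMem (fun hc => h1 (hP.mp hc).1),
      Set.indicator_of_notMem h1, zero_mul]
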